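/- In a clustered network with fully connected clusters and λ_c = λ, the version age of a single node satisfies the two-sided bound ((k−1)² + k)/k² · Δ_c + (λ_e/λ)·((k−1)/k · Σ_{ℓ=1}^{k−1} 1/ℓ + 1/k) ≤ Δ_{S_1} ≤ Δ_c + (λ_e/λ)·Σ_{ℓ=1}^{k} 1/ℓ, where Δ_c = m λ_e/λ_s. -/

import Mathlib

noncomputable def Hsum (n : ℕ) : ℝ := ∑ l ∈ Finset.Icc 1 n, (1 : ℝ) / l

lemma Hsum_succ (n : ℕ) : Hsum (n + 1) = Hsum n + 1 / ((n : ℝ) + 1) := by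
  unfold Hsum
  rw [Finset.sum_Icc_succ_top (by omega)]
  push_cast; ring

lemma Hsum_pred (j : ℕ) (h : 1 ≤ j) : Hsum j = Hsum (j - 1) + 1 / (j : ℝ) := by
  obtain ⟨n, rfl⟩ : ∃ n, j = n + 1 := ⟨j - 1, by omega⟩
  simpa using Hsum_succ n

lemma Hsum_mono : Monotone Hsum := by
  intro a b hab
  unfold Hsum
  apply Finset.sum_le_sum_of_subset_of_nonneg
  · exact Finset.Icc_subset_Icc le_rfl hab
  · intro i _ _; positivity

lemma Hsum_diff_le (j n : ℕ) (h : j ≤ n) :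
    Hsum n - Hsum j ≤ ((n : ℝ) - j) / ((j : ℝ) + 1) := by
  induction n, h using Nat.le_induction with
  | base => simp
  | succ n hn ih =>
      have h1 : Hsum (n + 1) = Hsum n + 1 / ((n : ℝ) + 1) := Hsum_succ n
      have h2 : 1 / ((n : ℝ) + 1) ≤ 1 / ((j : ℝ) + 1) := by
        apply one_div_le_one_div_of_le
        · positivity
        · have : (j : ℝ) ≤ n := by exact_mod_cast hn
          linarith
      push_cast
      push_cast at ih
      have h3 : ((n : ℝ) + 1 - j) / ((j:ℝ) + 1)
          = ((n : ℝ) - j) / ((j:ℝ) + 1) + 1 / ((j:ℝ) + 1) := by ring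
      rw [h3]
      linarith

/-- field identity for the upper supersolution -/
lemma idw (lam rj rk A B : ℝ) (hB : B = A + 1 / rj) (hrj : rj ≠ 0) (hrk : rk ≠ 0)
    (h1 : rk - rj ≠ 0) (h2 : rk - rj + 1 ≠ 0) :
    lam + (rj * (rk - rj) * lam / rk) * (rk * A / (rk - rj))
      = (rj * (rk - rj + 1) * lam / rk) * (rk * B / (rk - rj + 1)) := by
  subst hB
  field_simp
  ring

/-- field identity for the lower subsolution -/
lemma idy (lam rj rk A B ε : ℝ) (hB : B = A + 1 / rj) (hrj : rj ≠ 0) (hrk1 : rk - 1 ≠ 0)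
    (h1 : rk - rj ≠ 0) (h2 : rk - rj + 1 ≠ 0) :
    lam + (rj * (rk - rj) * lam / (rk - 1))
        * ((rk - 1) * (A + ε) / (rk - rj))
      = (rj * (rk - rj + 1) * lam / (rk - 1))
        * ((rk - 1) * (B + ε) / (rk - rj + 1)) := by
  subst hB
  field_simp
  ring

lemma wmono' (rj rk A B : ℝ) (hB : B = A + 1 / rj) (hrj1 : 1 ≤ rj) (hgap : 1 ≤ rk - rj)
    (hrk2 : 2 ≤ rk) (hA : A ≤ (rk - rj) / (rj + 1)) (hA0 : 0 ≤ A) :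
    rk * A / (rk - rj) ≤ rk * B / (rk - rj + 1) := by
  subst hB
  have hrj0 : (0:ℝ) < rj := by linarith
  have hg0 : (0:ℝ) < rk - rj := by linarith
  have hg1 : (0:ℝ) < rk - rj + 1 := by linarith
  have hrk0 : (0:ℝ) < rk := by linarith
  rw [div_le_div_iff₀ hg0 hg1]
  have h2 : A * rj ≤ rk - rj := by
    rw [le_div_iff₀ (by linarith : (0:ℝ) < rj + 1)] at hA
    nlinarith [hA0]
  have h4 : A ≤ 1 / rj * (rk - rj) := by
    have hu : (0:ℝ) ≤ 1 / rj := by positivity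
    have h5 := mul_le_mul_of_nonneg_left h2 hu
    calc A = 1 / rj * (A * rj) := by field_simp
      _ ≤ 1 / rj * (rk - rj) := h5
  nlinarith [mul_le_mul_of_nonneg_left h4 hrk0.le]

lemma step_up (lam rj rk W0 W1 : ℝ) (hl : 0 < lam) (hrj1 : 1 ≤ rj) (hrk2 : 2 ≤ rk)
    (hgap : 1 ≤ rk - rj)
    (hid : lam + (rj * (rk - rj) * lam / rk) * W1 = (rj * (rk - rj + 1) * lam / rk) * W0)
    (hmono : W1 ≤ W0) :
    lam + (rj * (rk - rj) * lam / (rk - 1)) * W1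
      ≤ (rj * lam / rk + rj * (rk - rj) * lam / (rk - 1)) * W0 := by
  have hrk1 : (0:ℝ) < rk - 1 := by linarith
  have hc0 : (0 : ℝ) ≤ rj * (rk - rj) * lam :=
    mul_nonneg (mul_nonneg (by linarith) (by linarith)) hl.le
  have hδ : rj * (rk - rj) * lam / rk ≤ rj * (rk - rj) * lam / (rk - 1) :=
    div_le_div_of_nonneg_left hc0 hrk1 (by linarith)
  have hδ0 : 0 ≤ rj * (rk - rj) * lam / (rk - 1) - rj * (rk - rj) * lam / rk := by
    linarith
  have hP := mul_le_mul_of_nonneg_left hmono hδ0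
  have hz : rj * (rk - rj + 1) * lam / rk * W0 - lam - rj * (rk - rj) * lam / rk * W1
      = 0 := by linarith [hid]
  have hring : (rj * lam / rk + rj * (rk - rj) * lam / (rk - 1)) * W0
      - (lam + rj * (rk - rj) * lam / (rk - 1) * W1)
      = ((rj * (rk - rj) * lam / (rk - 1) - rj * (rk - rj) * lam / rk) * W0
        - (rj * (rk - rj) * lam / (rk - 1) - rj * (rk - rj) * lam / rk) * W1)
      + (rj * (rk - rj + 1) * lam / rk * W0 - lam - rj * (rk - rj) * lam / rk * W1) := by
    field_simp
    ring
  linarith [hP, hz, hring]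

lemma step_low (lam rj rk Y0 Y1 : ℝ) (hl : 0 < lam) (hrj1 : 1 ≤ rj) (hrk2 : 2 ≤ rk)
    (hgap : 1 ≤ rk - rj)
    (hid : lam + (rj * (rk - rj) * lam / (rk - 1)) * Y1
        = (rj * (rk - rj + 1) * lam / (rk - 1)) * Y0)
    (hY0 : 0 ≤ Y0) :
    (rj * lam / rk + rj * (rk - rj) * lam / (rk - 1)) * Y0
      ≤ lam + (rj * (rk - rj) * lam / (rk - 1)) * Y1 := by
  have hrk1 : (0:ℝ) < rk - 1 := by linarith
  have hrk0 : (0:ℝ) < rk := by linarith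
  have hc0 : (0:ℝ) ≤ rj * lam := mul_nonneg (by linarith) hl.le
  have hb : rj * lam / rk ≤ rj * lam / (rk - 1) :=
    div_le_div_of_nonneg_left hc0 hrk1 (by linarith)
  have hco := mul_le_mul_of_nonneg_right (add_le_add_right hb
      (rj * (rk - rj) * lam / (rk - 1))) hY0
  have hid2 : (rj * lam / (rk - 1) + rj * (rk - rj) * lam / (rk - 1)) * Y0
      = (rj * (rk - rj + 1) * lam / (rk - 1)) * Y0 := by
    ring
  linarith [hco, hid, hid2]

/-- combine recursion with supersolution: upper step -/
lemma rec_up (lamE lam Δc Dnext rj rk W0 W1 : ℝ) (hE : 0 < lamE) (hl : 0 < lam)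
    (hrj1 : 1 ≤ rj) (hrk2 : 2 ≤ rk) (hgap : 1 ≤ rk - rj)
    (hnext : Dnext ≤ Δc + (lamE / lam) * W1)
    (hstep : lam + (rj * (rk - rj) * lam / (rk - 1)) * W1
      ≤ (rj * lam / rk + rj * (rk - rj) * lam / (rk - 1)) * W0) :
    (lamE + (rj * lam / rk) * Δc + (rj * (rk - rj) * lam / (rk - 1)) * Dnext)
      / (rj * lam / rk + rj * (rk - rj) * lam / (rk - 1))
      ≤ Δc + (lamE / lam) * W0 := by
  have hrk0 : (0:ℝ) < rk := by linarith
  have hrk1 : (0:ℝ) < rk - 1 := by linarith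
  have hb : (0:ℝ) < rj * lam / rk :=
    div_pos (mul_pos (by linarith) hl) hrk0
  have ha : (0:ℝ) < rj * (rk - rj) * lam / (rk - 1) :=
    div_pos (mul_pos (mul_pos (by linarith) (by linarith)) hl) hrk1
  have hD : (0:ℝ) < rj * lam / rk + rj * (rk - rj) * lam / (rk - 1) := by linarith
  rw [div_le_iff₀ hD]
  have hE0 : (0:ℝ) < lamE / lam := by positivity
  have h1 := mul_le_mul_of_nonneg_left hnext ha.le
  have h2 := mul_le_mul_of_nonneg_left hstep hE0.le
  have hEl : lamE / lam * lam = lamE := by field_simp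
  nlinarith [h1, h2, hEl]

/-- combine recursion with subsolution: lower step -/
lemma rec_low (lamE lam Δc Dnext rj rk Y0 Y1 : ℝ) (hE : 0 < lamE) (hl : 0 < lam)
    (hrj1 : 1 ≤ rj) (hrk2 : 2 ≤ rk) (hgap : 1 ≤ rk - rj)
    (hnext : Δc + (lamE / lam) * Y1 ≤ Dnext)
    (hstep : (rj * lam / rk + rj * (rk - rj) * lam / (rk - 1)) * Y0
      ≤ lam + (rj * (rk - rj) * lam / (rk - 1)) * Y1) :
    Δc + (lamE / lam) * Y0
      ≤ (lamE + (rj * lam / rk) * Δc + (rj * (rk - rj) * lam / (rk - 1)) * Dnext)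
      / (rj * lam / rk + rj * (rk - rj) * lam / (rk - 1)) := by
  have hrk0 : (0:ℝ) < rk := by linarith
  have hrk1 : (0:ℝ) < rk - 1 := by linarith
  have hb : (0:ℝ) < rj * lam / rk :=
    div_pos (mul_pos (by linarith) hl) hrk0
  have ha : (0:ℝ) < rj * (rk - rj) * lam / (rk - 1) :=
    div_pos (mul_pos (mul_pos (by linarith) (by linarith)) hl) hrk1
  have hD : (0:ℝ) < rj * lam / rk + rj * (rk - rj) * lam / (rk - 1) := by linarith
  rw [le_div_iff₀ hD]
  have hE0 : (0:ℝ) < lamE / lam := by positivity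
  have h1 := mul_le_mul_of_nonneg_left hnext ha.le
  have h2 := mul_le_mul_of_nonneg_left hstep hE0.le
  have hEl : lamE / lam * lam = lamE := by field_simp
  nlinarith [h1, h2, hEl]

/-- Fully connected clusters with `λc = λ`: the single-node version age satisfies
`((k−1)²+k)/k²·Δc + (λe/λ)((k−1)/k·H_{k−1} + 1/k) ≤ Δ_{S_1} ≤ Δc + (λe/λ)·H_k`,
where `Δc = m·λe/λs`. -/
theorem stmt_11 (k : ℕ) (hk : 2 ≤ k) (m lamE lamS lam Δc : ℝ)
    (hm : 0 < m) (hE : 0 < lamE) (hS : 0 < lamS) (hl : 0 < lam)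
    (hΔc : Δc = m * lamE / lamS)
    (Δ : ℕ → ℝ)
    (hrec : ∀ j, 1 ≤ j → j ≤ k - 1 →
      Δ j = (lamE + ((j : ℝ) * lam / k) * Δc
          + ((j : ℝ) * ((k : ℝ) - j) * lam / ((k : ℝ) - 1)) * Δ (j + 1))
        / ((j : ℝ) * lam / k + (j : ℝ) * ((k : ℝ) - j) * lam / ((k : ℝ) - 1)))
    (hbnd : Δ k = Δc + lamE / lam) :
    (((k : ℝ) - 1) ^ 2 + k) / (k : ℝ) ^ 2 * Δc
        + (lamE / lam) * (((k : ℝ) - 1) / k * (∑ l ∈ Finset.Icc 1 (k - 1), (1 : ℝ) / l)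
            + 1 / k)
      ≤ Δ 1 ∧
    Δ 1 ≤ Δc + (lamE / lam) * ∑ l ∈ Finset.Icc 1 k, (1 : ℝ) / l := by
  have hrk2 : (2 : ℝ) ≤ (k : ℝ) := by exact_mod_cast hk
  have hrk0 : (0 : ℝ) < (k : ℝ) := by linarith
  have hrk1 : (0 : ℝ) < (k : ℝ) - 1 := by linarith
  have hΔc0 : 0 < Δc := by rw [hΔc]; positivity
  have hεpos : (0:ℝ) < 1 / ((k:ℝ) * ((k:ℝ) - 1)) := by positivity
  -- super/sub solutions
  let w : ℕ → ℝ := fun j => (k : ℝ) * (Hsum k - Hsum (j - 1)) / ((k : ℝ) - j + 1)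
  let y : ℕ → ℝ := fun j =>
    ((k : ℝ) - 1) * (Hsum k - Hsum (j - 1) + 1 / ((k : ℝ) * ((k : ℝ) - 1)))
      / ((k : ℝ) - j + 1)
  have key : ∀ i j : ℕ, 1 ≤ j → j + i = k →
      Δc + (lamE / lam) * y j ≤ Δ j ∧ Δ j ≤ Δc + (lamE / lam) * w j := by
    intro i
    induction i with
    | zero =>
        intro j hj1 hjk
        have hjk' : j = k := by omega
        subst hjk'
        have hH : Hsum j = Hsum (j - 1) + 1 / (j : ℝ) := Hsum_pred j hj1
        have hrj2 : (2:ℝ) ≤ (j:ℝ) := hrk2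
        have hwk : w j = 1 := by
          show (j : ℝ) * (Hsum j - Hsum (j - 1)) / ((j : ℝ) - j + 1) = 1
          rw [hH]
          have hne : (j:ℝ) ≠ 0 := by linarith
          field_simp
          ring
        have hyk : y j = 1 := by
          show ((j : ℝ) - 1) * (Hsum j - Hsum (j - 1) + 1 / ((j : ℝ) * ((j : ℝ) - 1)))
              / ((j : ℝ) - j + 1) = 1
          rw [hH]
          field_simp
          ring
        rw [hbnd, hwk, hyk]
        constructor <;> simp
    | succ i ih =>
        intro j hj1 hjk
        have hjk' : j ≤ k - 1 := by omega
        have ihj := ih (j + 1) (by omega) (by omega)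
        have hrj1 : (1 : ℝ) ≤ (j : ℝ) := by exact_mod_cast hj1
        have hgap : (1 : ℝ) ≤ (k : ℝ) - j := by
          have h : j + 1 ≤ k := by omega
          have : ((j : ℝ) + 1) ≤ (k : ℝ) := by exact_mod_cast h
          linarith
        have hrj0 : (0:ℝ) < (j:ℝ) := by linarith
        -- harmonic facts
        have hH : Hsum j = Hsum (j - 1) + 1 / (j : ℝ) := Hsum_pred j hj1
        have hj1p : (j + 1) - 1 = j := by omega
        have hwj1 : w (j + 1) = (k : ℝ) * (Hsum k - Hsum j) / ((k : ℝ) - j) := by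
          show (k : ℝ) * (Hsum k - Hsum ((j+1) - 1)) / ((k : ℝ) - (↑(j+1) : ℝ) + 1) = _
          rw [hj1p]
          push_cast
          ring_nf
        have hyj1 : y (j + 1) = ((k : ℝ) - 1) * (Hsum k - Hsum j + 1 / ((k:ℝ) * ((k:ℝ) - 1)))
            / ((k : ℝ) - j) := by
          show ((k : ℝ) - 1) * (Hsum k - Hsum ((j+1) - 1) + 1 / ((k:ℝ) * ((k:ℝ) - 1)))
              / ((k : ℝ) - (↑(j+1) : ℝ) + 1) = _
          rw [hj1p]
          push_cast
          ring_nf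
        have hwje : w j = (k:ℝ) * (Hsum k - Hsum (j - 1)) / ((k:ℝ) - j + 1) := rfl
        have hyje : y j = ((k:ℝ) - 1) * (Hsum k - Hsum (j - 1) + 1 / ((k:ℝ) * ((k:ℝ) - 1)))
            / ((k:ℝ) - j + 1) := rfl
        have hne1 : (k:ℝ) - j ≠ 0 := by linarith
        have hne2 : (k:ℝ) - j + 1 ≠ 0 := by linarith
        have hne3 : (k:ℝ) ≠ 0 := by linarith
        have hne4 : (j:ℝ) ≠ 0 := by linarith
        have hne5 : (k:ℝ) - 1 ≠ 0 := by linarith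
        -- identities
        have hB : Hsum k - Hsum (j - 1) = (Hsum k - Hsum j) + 1 / (j:ℝ) := by
          rw [hH]; ring
        have hidw : lam + ((j:ℝ) * ((k:ℝ) - j) * lam / k) * w (j + 1)
            = ((j:ℝ) * ((k:ℝ) - j + 1) * lam / k) * w j := by
          rw [hwj1, hwje]
          exact idw lam (j:ℝ) (k:ℝ) (Hsum k - Hsum j) (Hsum k - Hsum (j - 1)) hB
            hne4 hne3 hne1 hne2
        have hidy : lam + ((j:ℝ) * ((k:ℝ) - j) * lam / ((k:ℝ) - 1)) * y (j + 1)
            = ((j:ℝ) * ((k:ℝ) - j + 1) * lam / ((k:ℝ) - 1)) * y j := by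
          rw [hyj1, hyje]
          exact idy lam (j:ℝ) (k:ℝ) (Hsum k - Hsum j) (Hsum k - Hsum (j - 1))
            (1 / ((k:ℝ) * ((k:ℝ) - 1))) hB hne4 hne5 hne1 hne2
        -- monotonicity / positivity
        have hHle : Hsum k - Hsum j ≤ ((k:ℝ) - j) / ((j:ℝ) + 1) := Hsum_diff_le j k (by omega)
        have hA0 : 0 ≤ Hsum k - Hsum j := by
          have := Hsum_mono (show j ≤ k by omega); linarith
        have hwmono : w (j + 1) ≤ w j := by
          rw [hwj1, hwje]
          exact wmono' (j:ℝ) (k:ℝ) (Hsum k - Hsum j) (Hsum k - Hsum (j - 1)) hB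
            hrj1 hgap hrk2 hHle hA0
        have hy0 : 0 ≤ y j := by
          rw [hyje]
          have hm1 : Hsum (j - 1) ≤ Hsum k := Hsum_mono (by omega)
          have h0 : 0 ≤ Hsum k - Hsum (j - 1) + 1 / ((k:ℝ) * ((k:ℝ) - 1)) := by linarith
          have h1 : (0:ℝ) ≤ (k:ℝ) - 1 := by linarith
          have h2 : (0:ℝ) < (k:ℝ) - j + 1 := by linarith
          positivity
        -- step inequalities
        have hstepw := step_up lam (j:ℝ) (k:ℝ) (w j) (w (j+1)) hl hrj1 hrk2 hgap hidw hwmono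
        have hstepy := step_low lam (j:ℝ) (k:ℝ) (y j) (y (j+1)) hl hrj1 hrk2 hgap hidy hy0
        have hrj' := hrec j hj1 hjk'
        constructor
        · rw [hrj']
          exact rec_low lamE lam Δc (Δ (j+1)) (j:ℝ) (k:ℝ) (y j) (y (j+1))
            hE hl hrj1 hrk2 hgap ihj.1 hstepy
        · rw [hrj']
          exact rec_up lamE lam Δc (Δ (j+1)) (j:ℝ) (k:ℝ) (w j) (w (j+1))
            hE hl hrj1 hrk2 hgap ihj.2 hstepw
  have hmain := key (k - 1) 1 le_rfl (by omega)
  have hH0 : Hsum 0 = 0 := by unfold Hsum; simp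
  have hw1 : w 1 = Hsum k := by
    show (k:ℝ) * (Hsum k - Hsum 0) / ((k:ℝ) - (1:ℕ) + 1) = _
    rw [hH0]
    push_cast
    field_simp
    ring
  have hHk : Hsum k = Hsum (k - 1) + 1 / (k : ℝ) := Hsum_pred k (by omega)
  have hy1 : y 1 = ((k:ℝ) - 1) / k * Hsum (k - 1) + 1 / k := by
    show ((k:ℝ) - 1) * (Hsum k - Hsum 0 + 1 / ((k:ℝ) * ((k:ℝ) - 1)))
        / ((k:ℝ) - (1:ℕ) + 1) = _
    rw [hH0, hHk]
    push_cast
    field_simp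
    ring
  constructor
  · have h1 := hmain.1
    rw [hy1] at h1
    have hα : (((k:ℝ) - 1) ^ 2 + k) / (k:ℝ) ^ 2 * Δc ≤ Δc := by
      rw [div_mul_eq_mul_div, div_le_iff₀ (by positivity)]
      nlinarith
    have heq : (lamE / lam) * (((k:ℝ) - 1) / k * (∑ l ∈ Finset.Icc 1 (k - 1), (1 : ℝ) / l)
        + 1 / k) = (lamE / lam) * (((k:ℝ) - 1) / k * Hsum (k - 1) + 1 / k) := by
      unfold Hsum; ring
    linarith [h1, hα, heq.le, heq.ge]
  · have h2 := hmain.2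
    rw [hw1] at h2
    unfold Hsum at h2
    exact h2
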